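/- Let α > 0, let 0 < β < 1/2, let C be a real number with C ≥ α^{−1} · log((1−β)/β), and define F : ℝ → ℝ by F(x) = 1/(1 + e^{−Cx}). Then: (i) for all x < −α, F(x) < β; (ii) for all x > α, 1 − F(x) < β; and (iii) for every integer k ≥ 1 and every real x, |F^{(k)}(x)| ≤ k! · C^k. -/

import Mathlib

open Finset in
lemma sigmoid_deriv_rep (C : ℝ) (S : ℝ → ℝ)
    (hS : ∀ x, HasDerivAt S (C * (S x * (1 - S x))) x) :
    ∀ n : ℕ, 1 ≤ n → ∃ c : ℕ → ℝ,
      (∀ k, n ≤ k → c k = 0) ∧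
      (∑ k ∈ Finset.range n, |c k|) ≤ (n.factorial : ℝ) ∧
      ∀ x, iteratedDeriv n S x
        = C ^ n * ∑ k ∈ Finset.range n, c k * S x ^ (k+1) * (1 - S x) ^ (n-k) := by
  intro n hn
  induction n, hn using Nat.le_induction with
  | base =>
    refine ⟨fun k => if k = 0 then 1 else 0, ?_, ?_, ?_⟩
    · intro k hk
      have : k ≠ 0 := by omega
      simp [this]
    · simp
    · intro x
      rw [iteratedDeriv_one, (hS x).deriv]
      simp
  | succ n hn ih =>
    obtain ⟨c, hsupp, hsum, hform⟩ := ih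
    set cm : ℕ → ℝ := fun k => match k with | 0 => 0 | (j+1) => c j with hcm
    set c' : ℕ → ℝ := fun k => ((k:ℝ)+1) * c k - ((n:ℝ)+1-(k:ℝ)) * cm k with hc'
    have hcm0 : cm 0 = 0 := rfl
    have hcms : ∀ j, cm (j+1) = c j := fun j => rfl
    refine ⟨c', ?_, ?_, ?_⟩
    · intro k hk
      match k, hk with
      | (j+1), hk =>
        have h1 : c (j+1) = 0 := hsupp _ (by omega)
        have h2 : c j = 0 := hsupp _ (by omega)
        simp [hc', hcms, h1, h2]
    · -- sum bound
      have step1 : ∑ k ∈ range (n+1), |c' k|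
          ≤ ∑ k ∈ range (n+1), (((k:ℝ)+1) * |c k| + ((n:ℝ)+1-(k:ℝ)) * |cm k|) := by
        apply Finset.sum_le_sum
        intro k hk
        have hk' : (k:ℝ) ≤ n := by exact_mod_cast Nat.lt_succ_iff.mp (mem_range.mp hk)
        calc |c' k| ≤ |((k:ℝ)+1) * c k| + |((n:ℝ)+1-(k:ℝ)) * cm k| := abs_sub _ _
          _ = ((k:ℝ)+1) * |c k| + ((n:ℝ)+1-(k:ℝ)) * |cm k| := by
              rw [abs_mul, abs_mul, abs_of_nonneg (show (0:ℝ) ≤ (k:ℝ)+1 by positivity),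
                abs_of_nonneg (show (0:ℝ) ≤ (n:ℝ)+1-(k:ℝ) by linarith)]
      have e1 : ∑ k ∈ range (n+1), (((k:ℝ)+1) * |c k|)
          = ∑ k ∈ range n, (((k:ℝ)+1) * |c k|) := by
        rw [Finset.sum_range_succ, hsupp n le_rfl]
        simp
      have e2 : ∑ k ∈ range (n+1), (((n:ℝ)+1-(k:ℝ)) * |cm k|)
          = ∑ k ∈ range n, (((n:ℝ)-(k:ℝ)) * |c k|) := by
        rw [Finset.sum_range_succ' (fun k => (((n:ℝ)+1-(k:ℝ)) * |cm k|)) n]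
        simp only [hcm0, abs_zero, mul_zero, add_zero]
        apply Finset.sum_congr rfl
        intro k _
        rw [hcms]
        push_cast
        ring
      calc ∑ k ∈ range (n+1), |c' k|
          ≤ ∑ k ∈ range (n+1), (((k:ℝ)+1) * |c k| + ((n:ℝ)+1-(k:ℝ)) * |cm k|) := step1
        _ = ∑ k ∈ range n, (((k:ℝ)+1) * |c k|) + ∑ k ∈ range n, (((n:ℝ)-(k:ℝ)) * |c k|) := by
            rw [Finset.sum_add_distrib, e1, e2]
        _ = ∑ k ∈ range n, ((n:ℝ)+1) * |c k| := by
            rw [← Finset.sum_add_distrib]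
            apply Finset.sum_congr rfl
            intro k _
            ring
        _ = ((n:ℝ)+1) * ∑ k ∈ range n, |c k| := by rw [Finset.mul_sum]
        _ ≤ ((n:ℝ)+1) * (n.factorial : ℝ) := by
            apply mul_le_mul_of_nonneg_left hsum (by positivity)
        _ = ((n+1).factorial : ℝ) := by
            rw [Nat.factorial_succ]
            push_cast
            ring
    · -- the formula
      intro x
      have hGfun : iteratedDeriv n S
          = fun y => C ^ n * ∑ k ∈ range n, c k * S y ^ (k+1) * (1 - S y) ^ (n-k) :=
        funext hform
      have hD : HasDerivAt
          (fun y => C ^ n * ∑ k ∈ range n, c k * S y ^ (k+1) * (1 - S y) ^ (n-k))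
          (C ^ n * ∑ k ∈ range n,
            (c k * (((k+1 : ℕ):ℝ) * S x ^ k * (C * (S x * (1 - S x)))) * (1 - S x) ^ (n-k)
             + (c k * S x ^ (k+1)) * (((n-k : ℕ):ℝ) * (1 - S x) ^ (n-k-1)
                 * (0 - C * (S x * (1 - S x)))))) x := by
        apply HasDerivAt.const_mul
        apply HasDerivAt.fun_sum
        intro k hk
        exact (((hS x).pow (k+1)).const_mul (c k)).mul
          (((hasDerivAt_const x (1:ℝ)).sub (hS x)).pow (n-k))
      rw [iteratedDeriv_succ, hGfun, hD.deriv]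
      -- now the algebraic identity
      have e1 : ∑ k ∈ range (n+1), c' k * S x ^ (k+1) * (1 - S x) ^ (n+1-k)
          = ∑ k ∈ range n, c k * (((k:ℝ)+1) * S x ^ (k+1) * (1 - S x) ^ ((n-k)+1)
              - ((n:ℝ)-(k:ℝ)) * S x ^ (k+2) * (1 - S x) ^ (n-k)) := by
        have split : ∀ k ∈ range (n+1), c' k * S x ^ (k+1) * (1 - S x) ^ (n+1-k)
            = ((k:ℝ)+1) * c k * S x ^ (k+1) * (1 - S x) ^ (n+1-k)
              - ((n:ℝ)+1-(k:ℝ)) * cm k * S x ^ (k+1) * (1 - S x) ^ (n+1-k) := by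
          intro k _
          simp only [hc']
          ring
        rw [Finset.sum_congr rfl split, Finset.sum_sub_distrib]
        have eA : ∑ k ∈ range (n+1), ((k:ℝ)+1) * c k * S x ^ (k+1) * (1 - S x) ^ (n+1-k)
            = ∑ k ∈ range n, ((k:ℝ)+1) * c k * S x ^ (k+1) * (1 - S x) ^ ((n-k)+1) := by
          rw [Finset.sum_range_succ, hsupp n le_rfl]
          simp only [mul_zero, zero_mul, add_zero]
          apply Finset.sum_congr rfl
          intro k hk
          have hkn : k < n := mem_range.mp hk
          have h1 : n + 1 - k = (n - k) + 1 := by omega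
          rw [h1]
        have eB : ∑ k ∈ range (n+1), ((n:ℝ)+1-(k:ℝ)) * cm k * S x ^ (k+1) * (1 - S x) ^ (n+1-k)
            = ∑ k ∈ range n, ((n:ℝ)-(k:ℝ)) * c k * S x ^ (k+2) * (1 - S x) ^ (n-k) := by
          rw [Finset.sum_range_succ' (fun k =>
            ((n:ℝ)+1-(k:ℝ)) * cm k * S x ^ (k+1) * (1 - S x) ^ (n+1-k)) n]
          simp only [hcm0, Nat.cast_zero, mul_zero, zero_mul, add_zero]
          apply Finset.sum_congr rfl
          intro k hk
          rw [hcms]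
          have h1 : n + 1 - (k+1) = n - k := by omega
          rw [h1]
          push_cast
          ring
        rw [eA, eB, ← Finset.sum_sub_distrib]
        apply Finset.sum_congr rfl
        intro k _
        ring
      rw [e1, Finset.mul_sum, Finset.mul_sum]
      apply Finset.sum_congr rfl
      intro k hk
      have hkn : k < n := mem_range.mp hk
      obtain ⟨m, hm⟩ : ∃ m, n - k = m + 1 := ⟨n - k - 1, by omega⟩
      have hnk : ((n - k : ℕ):ℝ) = (m:ℝ) + 1 := by rw [hm]; push_cast; ring
      have hn' : (n:ℝ) = (k:ℝ) + (m:ℝ) + 1 := by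
        have : n = k + m + 1 := by omega
        exact_mod_cast congrArg (Nat.cast : ℕ → ℝ) this
      rw [hnk, hm, hn']
      simp only [Nat.add_sub_cancel]
      push_cast
      ring

/-- Properties of the logistic sigmoid `F(x) = 1/(1 + e^(-Cx))` with
`C ≥ α⁻¹ log((1-β)/β)`: it is within `β` of a step function outside `[-α, α]`, and its
`k`-th derivative is bounded by `k! C^k`. -/
theorem stmt_13 (α β C : ℝ) (hα : 0 < α) (hβ0 : 0 < β) (hβ : β < 1 / 2)
    (hC : α⁻¹ * Real.log ((1 - β) / β) ≤ C)
    (F : ℝ → ℝ) (hF : F = fun x => 1 / (1 + Real.exp (-C * x))) :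
    (∀ x < -α, F x < β) ∧
    (∀ x > α, 1 - F x < β) ∧
    (∀ k : ℕ, 1 ≤ k → ∀ x : ℝ, |iteratedDeriv k F x| ≤ (k.factorial : ℝ) * C ^ k) := by
  have hβ1 : (0:ℝ) < 1 - β := by linarith
  have hquot : 1 < (1 - β) / β := by rw [lt_div_iff₀ hβ0]; linarith
  have hlog : 0 < Real.log ((1 - β) / β) := Real.log_pos hquot
  have hCpos : 0 < C := lt_of_lt_of_le (by positivity) hC
  have hCα : Real.log ((1 - β) / β) ≤ C * α := by
    calc Real.log ((1 - β) / β) = α * (α⁻¹ * Real.log ((1 - β) / β)) := by field_simp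
      _ ≤ α * C := mul_le_mul_of_nonneg_left hC hα.le
      _ = C * α := mul_comm _ _
  have hexpL : Real.exp (Real.log ((1 - β) / β)) = (1 - β) / β := Real.exp_log (by positivity)
  subst hF
  refine ⟨?_, ?_, ?_⟩
  · intro x hx
    show 1 / (1 + Real.exp (-C * x)) < β
    have h1 : Real.log ((1 - β) / β) < -C * x := by nlinarith
    have h2 : (1 - β) / β < Real.exp (-C * x) := by
      rw [← hexpL]; exact Real.exp_lt_exp.mpr h1
    have h3 : 1 / β < 1 + Real.exp (-C * x) := by
      have e : (1:ℝ) / β = 1 + (1 - β) / β := by field_simp; ring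
      rw [e]; linarith
    have hden : (0:ℝ) < 1 + Real.exp (-C * x) := by positivity
    rw [div_lt_iff₀ hden]
    have h4 := mul_lt_mul_of_pos_left h3 hβ0
    rw [mul_one_div, div_self hβ0.ne'] at h4
    linarith
  · intro x hx
    show 1 - 1 / (1 + Real.exp (-C * x)) < β
    have h1 : -C * x < -Real.log ((1 - β) / β) := by nlinarith
    have h2 : Real.exp (-C * x) < β / (1 - β) := by
      have : Real.exp (-Real.log ((1 - β) / β)) = β / (1 - β) := by
        rw [Real.exp_neg, hexpL]
        field_simp
      rw [← this]
      exact Real.exp_lt_exp.mpr h1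
    have he : (0:ℝ) < Real.exp (-C * x) := Real.exp_pos _
    have hden : (0:ℝ) < 1 + Real.exp (-C * x) := by positivity
    have e : 1 - 1 / (1 + Real.exp (-C * x)) = Real.exp (-C * x) / (1 + Real.exp (-C * x)) := by
      field_simp
      ring
    rw [e, div_lt_iff₀ hden]
    have h3 : Real.exp (-C * x) * (1 - β) < β := by
      have := mul_lt_mul_of_pos_right h2 hβ1
      rwa [div_mul_cancel₀ _ hβ1.ne'] at this
    nlinarith
  · -- derivative bounds
    have hS : ∀ x : ℝ, HasDerivAt (fun x => 1 / (1 + Real.exp (-C * x)))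
        (C * ((fun x => 1 / (1 + Real.exp (-C * x))) x
          * (1 - (fun x => 1 / (1 + Real.exp (-C * x))) x))) x := by
      intro x
      have he : 0 < Real.exp (-C * x) := Real.exp_pos _
      have hd : (1:ℝ) + Real.exp (-C * x) ≠ 0 := by positivity
      have h1 : HasDerivAt (fun x : ℝ => Real.exp (-C * x)) (Real.exp (-C * x) * (-C)) x := by
        have := (Real.hasDerivAt_exp (-C * x)).comp x ((hasDerivAt_id x).const_mul (-C))
        simpa [Function.comp_def] using this
      have h2 : HasDerivAt (fun x : ℝ => 1 + Real.exp (-C * x)) (Real.exp (-C * x) * (-C)) x := by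
        exact h1.const_add 1
      have h3 := (hasDerivAt_const x (1:ℝ)).fun_div h2 hd
      refine h3.congr_deriv ?_
      field_simp
      ring
    intro k hk x
    obtain ⟨c, hsupp, hsum, hform⟩ := sigmoid_deriv_rep C _ hS k hk
    rw [hform x]
    set u : ℝ := (fun x => 1 / (1 + Real.exp (-C * x))) x with hu
    have he : 0 < Real.exp (-C * x) := Real.exp_pos _
    have hden : (0:ℝ) < 1 + Real.exp (-C * x) := by positivity
    have hu0 : 0 < u := by rw [hu]; positivity
    have hu1 : u < 1 := by
      rw [hu]
      show 1 / (1 + Real.exp (-C * x)) < 1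
      rw [div_lt_one hden]
      linarith
    have hterm : ∀ j ∈ Finset.range k, |c j * u ^ (j+1) * (1 - u) ^ (k-j)| ≤ |c j| := by
      intro j _
      have hp1 : (0:ℝ) ≤ u ^ (j+1) := pow_nonneg hu0.le _
      have hp2 : (0:ℝ) ≤ (1 - u) ^ (k-j) := pow_nonneg (by linarith) _
      rw [abs_mul, abs_mul, abs_of_nonneg hp1, abs_of_nonneg hp2]
      calc |c j| * u ^ (j+1) * (1 - u) ^ (k-j)
          ≤ |c j| * 1 * 1 := by
            apply mul_le_mul (mul_le_mul le_rfl (pow_le_one₀ hu0.le hu1.le) hp1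
              (abs_nonneg _)) (pow_le_one₀ (by linarith) (by linarith)) hp2
              (by positivity)
        _ = |c j| := by ring
    calc |C ^ k * ∑ j ∈ Finset.range k, c j * u ^ (j+1) * (1 - u) ^ (k-j)|
        = C ^ k * |∑ j ∈ Finset.range k, c j * u ^ (j+1) * (1 - u) ^ (k-j)| := by
          rw [abs_mul, abs_of_nonneg (by positivity : (0:ℝ) ≤ C ^ k)]
      _ ≤ C ^ k * ∑ j ∈ Finset.range k, |c j * u ^ (j+1) * (1 - u) ^ (k-j)| :=
          mul_le_mul_of_nonneg_left (Finset.abs_sum_le_sum_abs _ _) (by positivity)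
      _ ≤ C ^ k * ∑ j ∈ Finset.range k, |c j| :=
          mul_le_mul_of_nonneg_left (Finset.sum_le_sum hterm) (by positivity)
      _ ≤ C ^ k * (k.factorial : ℝ) := mul_le_mul_of_nonneg_left hsum (by positivity)
      _ = (k.factorial : ℝ) * C ^ k := mul_comm _ _
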